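/- Suppose b = z_{t0}. Then: (i) if (U*, X*) is an optimal solution of Problem (P) with initial time t0, initial state x_{t0} and level b (admissible, with cost less than or equal to that of every admissible pair), then, defining V*_t = E[g(X*_T) | ℱ_{t0:t+1}] − E[g(X*_T) | ℱ_{t0:t}] and Z*_{t0} = z_{t0}, Z*_{t+1} = Z*_t + V*_t, the quadruple (U*, V*, X*, Z*) is an optimal solution of Problem (E) with initial point (x_{t0}, z_{t0}); (ii) if (U♭, V♭, X♭, Z♭) is an optimal solution of Problem (E) with initial point (x_{t0}, z_{t0}), then (U♭, X♭) is an optimal solution of Problem (P) with level b. In particular the two problems have the same optimal value. -/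

import Mathlib

open MeasureTheory ProbabilityTheory
open scoped ENNReal BigOperators

section Setup

variable {Ω : Type*} [MeasurableSpace Ω] {T m : ℕ}
  {𝕏 : ℕ → Type*} [∀ t, MeasurableSpace (𝕏 t)]
  {𝕌 : ℕ → Type*} [∀ t, MeasurableSpace (𝕌 t)]
  {𝕎 : ℕ → Type*} [∀ t, MeasurableSpace (𝕎 t)]

/-- The σ-field `ℱ_{t0:t} = σ(w_{t0+1}, …, w_t)` generated by the noise variables,
with `ℱ_{t0:t0}` the trivial σ-field. -/
def noiseFiltration (w : (t : ℕ) → Ω → 𝕎 t) (t0 t : ℕ) : MeasurableSpace Ω :=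
  ⨆ s ∈ Set.Icc (t0 + 1) t, MeasurableSpace.comap (w s) inferInstance

variable (μ : Measure Ω) (w : (t : ℕ) → Ω → 𝕎 t)
  (f : (t : ℕ) → 𝕏 t → 𝕌 t → 𝕎 (t + 1) → 𝕏 (t + 1))
  (L : (t : ℕ) → 𝕏 t → 𝕌 t → 𝕎 (t + 1) → ℝ≥0∞)
  (K : 𝕏 T → ℝ≥0∞) (g : 𝕏 T → Fin m → ℝ)

/-- Admissible pair `(U, X)` for Problem (P) with initial time `t0`, initial state `x0`
and constraint level `b`: initial condition, dynamics, nonanticipativity, and the final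
expectation constraint `E[g(X_T)] ≤ b` (componentwise, `g(X_T)` being integrable). -/
def AdmissibleP (t0 : ℕ) (x0 : 𝕏 t0) (b : Fin m → ℝ)
    (U : (t : ℕ) → Ω → 𝕌 t) (X : (t : ℕ) → Ω → 𝕏 t) : Prop :=
  (∀ ω, X t0 ω = x0) ∧
  (∀ t, t0 ≤ t → t < T → ∀ ω, X (t + 1) ω = f t (X t ω) (U t ω) (w (t + 1) ω)) ∧
  (∀ t, t0 ≤ t → t < T →
    MeasurableSpace.comap (U t) inferInstance ≤ noiseFiltration w t0 t) ∧
  Integrable (fun ω => g (X T ω)) μ ∧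
  (∀ i, ∫ ω, g (X T ω) i ∂μ ≤ b i)

/-- Cost of a pair `(U, X)` in Problem (P). -/
noncomputable def costP (t0 : ℕ) (U : (t : ℕ) → Ω → 𝕌 t) (X : (t : ℕ) → Ω → 𝕏 t) : ℝ≥0∞ :=
  ∫⁻ ω, (∑ t ∈ Finset.Ico t0 T, L t (X t ω) (U t ω) (w (t + 1) ω)) + K (X T ω) ∂μ

/-- Admissible quadruple `(U, V, X, Z)` for Problem (E) with initial time `t0` and
initial point `(x0, z0)`: dynamics and nonanticipativity for `(U, X)`, integrability,
nonanticipativity and the martingale-type constraint `E[V_t | ℱ_{t0:t}] = 0` for `V`,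
the dynamics `Z_{t+1} = Z_t + V_t`, and the a.s. final constraint `g(X_T) ≤ Z_T`. -/
def AdmissibleE (t0 : ℕ) (x0 : 𝕏 t0) (z0 : Fin m → ℝ)
    (U : (t : ℕ) → Ω → 𝕌 t) (V : ℕ → Ω → Fin m → ℝ)
    (X : (t : ℕ) → Ω → 𝕏 t) (Z : ℕ → Ω → Fin m → ℝ) : Prop :=
  (∀ ω, X t0 ω = x0) ∧
  (∀ t, t0 ≤ t → t < T → ∀ ω, X (t + 1) ω = f t (X t ω) (U t ω) (w (t + 1) ω)) ∧
  (∀ t, t0 ≤ t → t < T →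
    MeasurableSpace.comap (U t) inferInstance ≤ noiseFiltration w t0 t) ∧
  (∀ t, t0 ≤ t → t < T →
    Integrable (V t) μ ∧
    MeasurableSpace.comap (V t) inferInstance ≤ noiseFiltration w t0 (t + 1) ∧
    μ[V t | noiseFiltration w t0 t] =ᵐ[μ] 0) ∧
  (∀ ω, Z t0 ω = z0) ∧
  (∀ t, t0 ≤ t → t < T → ∀ ω, Z (t + 1) ω = Z t ω + V t ω) ∧
  (∀ᵐ ω ∂μ, ∀ i, g (X T ω) i ≤ Z T ω i)

/-- Cost of a quadruple `(U, V, X, Z)` in Problem (E) (the same expression as in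
Problem (P)). -/
noncomputable def costE (t0 : ℕ) (U : (t : ℕ) → Ω → 𝕌 t) (V : ℕ → Ω → Fin m → ℝ)
    (X : (t : ℕ) → Ω → 𝕏 t) (Z : ℕ → Ω → Fin m → ℝ) : ℝ≥0∞ :=
  ∫⁻ ω, (∑ t ∈ Finset.Ico t0 T, L t (X t ω) (U t ω) (w (t + 1) ω)) + K (X T ω) ∂μ

end Setup

section Helpers

set_option linter.unusedSectionVars false

variable {Ω : Type*} [m0 : MeasurableSpace Ω] {T m : ℕ}
  {𝕏 : ℕ → Type*} [∀ t, MeasurableSpace (𝕏 t)]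
  {𝕌 : ℕ → Type*} [∀ t, MeasurableSpace (𝕌 t)]
  {𝕎 : ℕ → Type*} [∀ t, MeasurableSpace (𝕎 t)]
  {w : (t : ℕ) → Ω → 𝕎 t} {t0 : ℕ}

lemma nf_le (hw : ∀ t, Measurable (w t)) (t : ℕ) : noiseFiltration w t0 t ≤ m0 :=
  iSup₂_le fun s _ => measurable_iff_comap_le.mp (hw s)

lemma nf_mono {t t' : ℕ} (h : t ≤ t') : noiseFiltration w t0 t ≤ noiseFiltration w t0 t' :=
  iSup₂_le fun s hs =>
    le_iSup₂ (f := fun s (_ : s ∈ Set.Icc (t0+1) t') => MeasurableSpace.comap (w s) inferInstance)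
      s ⟨hs.1, hs.2.trans h⟩

lemma nf_self : noiseFiltration w t0 t0 = ⊥ := by
  rw [noiseFiltration, Set.Icc_eq_empty (by omega)]
  simp

lemma nf_w_meas {t : ℕ} (ht : t0 ≤ t) :
    MeasurableSpace.comap (w (t+1)) inferInstance ≤ noiseFiltration w t0 (t+1) :=
  le_iSup₂ (f := fun s (_ : s ∈ Set.Icc (t0+1) (t+1)) => MeasurableSpace.comap (w s) inferInstance)
    (t+1) ⟨by omega, le_rfl⟩

/-- The state process is adapted to the noise filtration. -/
lemma X_meas {f : (t : ℕ) → 𝕏 t → 𝕌 t → 𝕎 (t + 1) → 𝕏 (t + 1)}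
    (hf : ∀ t, Measurable fun p : 𝕏 t × 𝕌 t × 𝕎 (t + 1) => f t p.1 p.2.1 p.2.2)
    {U : (t : ℕ) → Ω → 𝕌 t} {X : (t : ℕ) → Ω → 𝕏 t} {x0 : 𝕏 t0}
    (hX0 : ∀ ω, X t0 ω = x0)
    (hdyn : ∀ t, t0 ≤ t → t < T → ∀ ω, X (t + 1) ω = f t (X t ω) (U t ω) (w (t + 1) ω))
    (hU : ∀ t, t0 ≤ t → t < T →
      MeasurableSpace.comap (U t) inferInstance ≤ noiseFiltration w t0 t) :
    ∀ t, t0 ≤ t → t ≤ T → Measurable[noiseFiltration w t0 t] (X t) := by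
  intro t ht
  induction t, ht using Nat.le_induction with
  | base =>
    intro _
    have : X t0 = fun _ => x0 := funext hX0
    rw [this]; exact measurable_const
  | succ t ht ih =>
    intro htT
    have hlt : t < T := by omega
    have hXt : Measurable[noiseFiltration w t0 (t+1)] (X t) :=
      (ih (by omega)).mono (nf_mono (Nat.le_succ t)) le_rfl
    have hUt : Measurable[noiseFiltration w t0 (t+1)] (U t) :=
      (measurable_iff_comap_le.mpr ((hU t ht hlt).trans (nf_mono (Nat.le_succ t))))
    have hwt : Measurable[noiseFiltration w t0 (t+1)] (w (t+1)) :=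
      measurable_iff_comap_le.mpr (nf_w_meas ht)
    have : X (t+1) = fun ω => f t (X t ω) (U t ω) (w (t+1) ω) := funext (hdyn t ht hlt)
    rw [this]
    exact (hf t).comp (hXt.prodMk (hUt.prodMk hwt))

end Helpers

section Core

set_option linter.unusedSectionVars false
set_option maxHeartbeats 1000000

variable {Ω : Type*} [m0 : MeasurableSpace Ω] {T m : ℕ}
  {𝕏 : ℕ → Type*} [∀ t, MeasurableSpace (𝕏 t)]
  {𝕌 : ℕ → Type*} [∀ t, MeasurableSpace (𝕌 t)]
  {𝕎 : ℕ → Type*} [∀ t, MeasurableSpace (𝕎 t)]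
  {μ : Measure Ω} [IsProbabilityMeasure μ]
  {w : (t : ℕ) → Ω → 𝕎 t}
  {f : (t : ℕ) → 𝕏 t → 𝕌 t → 𝕎 (t + 1) → 𝕏 (t + 1)}
  {g : 𝕏 T → Fin m → ℝ} {t0 : ℕ}

/-- helper: coordinate of a vector integral -/
lemma integral_coord {V : Ω → Fin m → ℝ} (hV : Integrable V μ) (i : Fin m) :
    ∫ ω, V ω i ∂μ = (∫ ω, V ω ∂μ) i := by
  have := (ContinuousLinearMap.proj (R := ℝ) (φ := fun _ : Fin m => ℝ) i).integral_comp_comm hV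
  simpa using this

lemma integral_V_zero {mF : MeasurableSpace Ω} (hm : mF ≤ m0) {V : Ω → Fin m → ℝ}
    (hVi : Integrable V μ) (h0 : μ[V | mF] =ᵐ[μ] 0) : ∫ ω, V ω ∂μ = 0 := by
  rw [← integral_condExp hm (f := V), integral_congr_ae h0]
  simp

/-- Lemma A: an admissible quadruple for (E) yields an admissible pair for (P). -/
lemma EtoP (hw : ∀ t, Measurable (w t))
    (hf : ∀ t, Measurable fun p : 𝕏 t × 𝕌 t × 𝕎 (t + 1) => f t p.1 p.2.1 p.2.2)
    (hg : Measurable g) (hgpos : ∀ x i, 0 ≤ g x i) (ht0 : t0 ≤ T)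
    {x0 : 𝕏 t0} {z0 : Fin m → ℝ} {U : (t : ℕ) → Ω → 𝕌 t} {V : ℕ → Ω → Fin m → ℝ}
    {X : (t : ℕ) → Ω → 𝕏 t} {Z : ℕ → Ω → Fin m → ℝ}
    (hE : AdmissibleE μ w f g t0 x0 z0 U V X Z) :
    AdmissibleP μ w f g t0 x0 z0 U X := by
  obtain ⟨hX0, hdyn, hU, hV, hZ0, hZrec, hcon⟩ := hE
  -- explicit formula for Z
  have hZ : ∀ s, t0 ≤ s → s ≤ T → ∀ ω, Z s ω = z0 + ∑ t ∈ Finset.Ico t0 s, V t ω := by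
    intro s hs
    induction s, hs using Nat.le_induction with
    | base => intro _ ω; simp [hZ0 ω]
    | succ s hs ih =>
      intro hsT ω
      rw [hZrec s hs (by omega) ω, ih (by omega) ω, Finset.sum_Ico_succ_top hs, add_assoc]
  have hZT : Z T = fun ω => z0 + ∑ t ∈ Finset.Ico t0 T, V t ω := funext (hZ T ht0 le_rfl)
  have hVint : ∀ t ∈ Finset.Ico t0 T, Integrable (V t) μ := fun t ht =>
    (hV t (Finset.mem_Ico.mp ht).1 (Finset.mem_Ico.mp ht).2).1
  have hZTint : Integrable (Z T) μ := by
    rw [hZT]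
    exact (integrable_const z0).add (integrable_finset_sum _ hVint)
  have hZTcoord : ∀ i : Fin m, Integrable (fun ω => Z T ω i) μ := by
    intro i
    have := (ContinuousLinearMap.proj (R := ℝ) (φ := fun _ : Fin m => ℝ) i).integrable_comp hZTint
    simpa using this
  have hXT : Measurable (X T) :=
    ((X_meas hf hX0 hdyn hU T ht0 le_rfl).mono (nf_le hw T) le_rfl)
  have hGmeas : Measurable (fun ω => g (X T ω)) := hg.comp hXT
  -- integrability of g(X_T)
  have hGint : Integrable (fun ω => g (X T ω)) μ := by
    refine Integrable.mono' (g := fun ω => ∑ i : Fin m, |Z T ω i|)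
      (integrable_finset_sum _ fun i _ => (hZTcoord i).abs) hGmeas.aestronglyMeasurable ?_
    filter_upwards [hcon] with ω hω
    have hnn : (0:ℝ) ≤ ∑ i : Fin m, |Z T ω i| :=
      Finset.sum_nonneg fun i _ => abs_nonneg _
    rw [pi_norm_le_iff_of_nonneg hnn]
    intro i
    have h1 : g (X T ω) i ≤ |Z T ω i| := (hω i).trans (le_abs_self _)
    have h2 : ‖g (X T ω) i‖ = g (X T ω) i := abs_of_nonneg (hgpos _ i)
    calc ‖g (X T ω) i‖ ≤ |Z T ω i| := by rw [h2]; exact h1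
      _ ≤ ∑ j : Fin m, |Z T ω j| :=
          Finset.single_le_sum (f := fun j => |Z T ω j|) (fun j _ => abs_nonneg _) (Finset.mem_univ i)
  refine ⟨hX0, hdyn, hU, hGint, ?_⟩
  intro i
  have hGicoord : Integrable (fun ω => g (X T ω) i) μ := by
    have := (ContinuousLinearMap.proj (R := ℝ) (φ := fun _ : Fin m => ℝ) i).integrable_comp hGint
    simpa using this
  have hle : ∫ ω, g (X T ω) i ∂μ ≤ ∫ ω, Z T ω i ∂μ :=
    integral_mono_ae hGicoord (hZTcoord i) (hcon.mono fun ω hω => hω i)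
  have hZTval : ∫ ω, Z T ω i ∂μ = z0 i := by
    have h1 : (fun ω => Z T ω i) = fun ω => z0 i + ∑ t ∈ Finset.Ico t0 T, V t ω i := by
      funext ω; rw [hZ T ht0 le_rfl ω]; simp [Finset.sum_apply]
    rw [h1, integral_add (integrable_const _) (integrable_finset_sum _ fun t ht => by
      have := (ContinuousLinearMap.proj (R := ℝ) (φ := fun _ : Fin m => ℝ) i).integrable_comp (hVint t ht)
      simpa using this), integral_const]
    simp only [measure_univ, ENNReal.toReal_one, smul_eq_mul, one_mul]
    rw [integral_finset_sum _ (fun t ht => by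
      have := (ContinuousLinearMap.proj (R := ℝ) (φ := fun _ : Fin m => ℝ) i).integrable_comp (hVint t ht)
      simpa using this)]
    have : ∀ t ∈ Finset.Ico t0 T, ∫ ω, V t ω i ∂μ = 0 := by
      intro t ht
      obtain ⟨ht1, ht2⟩ := Finset.mem_Ico.mp ht
      have hVz : ∫ ω, V t ω ∂μ = 0 :=
        integral_V_zero (nf_le hw t) (hV t ht1 ht2).1 (hV t ht1 ht2).2.2
      rw [integral_coord (hV t ht1 ht2).1 i, hVz]
      rfl
    rw [Finset.sum_congr rfl this]
    simp
  rw [← hZTval]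
  exact hle

/-- Lemma B: an admissible pair for (P) together with the martingale-difference process
built from conditional expectations yields an admissible quadruple for (E). -/
lemma PtoE (hw : ∀ t, Measurable (w t))
    (hf : ∀ t, Measurable fun p : 𝕏 t × 𝕌 t × 𝕎 (t + 1) => f t p.1 p.2.1 p.2.2)
    (hg : Measurable g) (ht0 : t0 ≤ T)
    {x0 : 𝕏 t0} {z0 : Fin m → ℝ} {U : (t : ℕ) → Ω → 𝕌 t} {X : (t : ℕ) → Ω → 𝕏 t}
    (hP : AdmissibleP μ w f g t0 x0 z0 U X)
    {V : ℕ → Ω → Fin m → ℝ}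
    (hVdef : ∀ t, V t = fun ω =>
      (μ[fun ω' => g (X T ω') | noiseFiltration w t0 (t + 1)]) ω
        - (μ[fun ω' => g (X T ω') | noiseFiltration w t0 t]) ω)
    {Z : ℕ → Ω → Fin m → ℝ}
    (hZ0 : ∀ ω, Z t0 ω = z0)
    (hZrec : ∀ t, t0 ≤ t → t < T → ∀ ω, Z (t + 1) ω = Z t ω + V t ω) :
    AdmissibleE μ w f g t0 x0 z0 U V X Z := by
  obtain ⟨hX0, hdyn, hU, hGint, hGexp⟩ := hP
  set G : Ω → Fin m → ℝ := fun ω => g (X T ω) with hGdef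
  set M : ℕ → Ω → Fin m → ℝ := fun t => μ[G | noiseFiltration w t0 t] with hMdef
  have hVM : ∀ t, V t = M (t + 1) - M t := by
    intro t; rw [hVdef t]; rfl
  refine ⟨hX0, hdyn, hU, ?_, hZ0, hZrec, ?_⟩
  · intro t ht htT
    refine ⟨?_, ?_, ?_⟩
    · rw [hVM t]
      exact integrable_condExp.sub integrable_condExp
    · rw [hVM t]
      refine measurable_iff_comap_le.mp ?_
      have h1 : Measurable[noiseFiltration w t0 (t+1)] (M (t+1)) :=
        stronglyMeasurable_condExp.measurable
      have h2 : Measurable[noiseFiltration w t0 (t+1)] (M t) :=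
        ((stronglyMeasurable_condExp).mono (nf_mono (Nat.le_succ t))).measurable
      exact h1.sub h2
    · have hle : noiseFiltration w t0 t ≤ noiseFiltration w t0 (t+1) := nf_mono (Nat.le_succ t)
      have e1 : μ[M (t+1) | noiseFiltration w t0 t] =ᵐ[μ] M t :=
        condExp_condExp_of_le hle (nf_le hw (t+1))
      have e2 : μ[M t | noiseFiltration w t0 t] = M t :=
        condExp_of_stronglyMeasurable (nf_le hw t) stronglyMeasurable_condExp integrable_condExp
      have e3 : μ[V t | noiseFiltration w t0 t]
          =ᵐ[μ] μ[M (t+1) | noiseFiltration w t0 t] - μ[M t | noiseFiltration w t0 t] := by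
        rw [hVM t]
        exact condExp_sub integrable_condExp integrable_condExp _
      refine e3.trans ?_
      filter_upwards [e1] with ω hω
      simp [Pi.sub_apply, hω, e2]
  · -- the a.s. final constraint
    have hXT : Measurable[noiseFiltration w t0 T] (X T) := X_meas hf hX0 hdyn hU T ht0 le_rfl
    have hGsm : StronglyMeasurable[noiseFiltration w t0 T] G :=
      (hg.comp hXT).stronglyMeasurable
    have hMT : M T = G :=
      condExp_of_stronglyMeasurable (nf_le hw T) hGsm hGint
    have hM0 : M t0 = fun _ => ∫ ω, G ω ∂μ := by
      have hb : noiseFiltration (Ω := Ω) w t0 t0 = ⊥ := nf_self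
      show μ[G | noiseFiltration w t0 t0] = _
      rw [hb]
      exact condExp_bot G
    have hZfor : ∀ s, t0 ≤ s → s ≤ T → ∀ ω, Z s ω = z0 + (M s ω - M t0 ω) := by
      intro s hs
      induction s, hs using Nat.le_induction with
      | base => intro _ ω; simp [hZ0 ω]
      | succ s hs ih =>
        intro hsT ω
        rw [hZrec s hs (by omega) ω, ih (by omega) ω, hVM s]
        simp only [Pi.sub_apply]
        abel
    refine Filter.Eventually.of_forall ?_
    intro ω i
    have h2 : Z T ω i = z0 i + (G ω i - (∫ ω', G ω' ∂μ) i) := by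
      rw [hZfor T ht0 le_rfl ω, hMT, hM0]
      rfl
    have h3 : (∫ ω', G ω' ∂μ) i ≤ z0 i := by
      rw [← integral_coord hGint i]
      exact hGexp i
    have h4 : (∫ ω', G ω' ∂μ) i = ∫ ω', G ω' i ∂μ := (integral_coord hGint i).symm
    rw [h2]
    simp only [hGdef]
    linarith [h3]

/-- From an admissible pair for (P) one can construct an admissible quadruple for (E). -/
lemma exists_E (hw : ∀ t, Measurable (w t))
    (hf : ∀ t, Measurable fun p : 𝕏 t × 𝕌 t × 𝕎 (t + 1) => f t p.1 p.2.1 p.2.2)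
    (hg : Measurable g) (ht0 : t0 ≤ T)
    {x0 : 𝕏 t0} {z0 : Fin m → ℝ} {U : (t : ℕ) → Ω → 𝕌 t} {X : (t : ℕ) → Ω → 𝕏 t}
    (hP : AdmissibleP μ w f g t0 x0 z0 U X) :
    ∃ V Z, AdmissibleE μ w f g t0 x0 z0 U V X Z := by
  refine ⟨fun t ω => (μ[fun ω' => g (X T ω') | noiseFiltration w t0 (t + 1)]) ω
      - (μ[fun ω' => g (X T ω') | noiseFiltration w t0 t]) ω,
    fun t ω => z0 + ∑ s ∈ Finset.Ico t0 t,
      ((μ[fun ω' => g (X T ω') | noiseFiltration w t0 (s + 1)]) ω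
        - (μ[fun ω' => g (X T ω') | noiseFiltration w t0 s]) ω), ?_⟩
  refine PtoE hw hf hg ht0 hP (fun t => rfl) (fun ω => by simp) ?_
  intro t ht _ ω
  rw [Finset.sum_Ico_succ_top ht, add_assoc]

end Core
/-- **Equivalence of Problems (P) and (E) (Proposition 1).**
Suppose `b = z_{t0}`. (i) From an optimal solution `(U*, X*)` of Problem (P), the
quadruple `(U*, V*, X*, Z*)` built from the conditional expectations of `g(X*_T)` is an
optimal solution of Problem (E). (ii) The first and third components of an optimal
solution of Problem (E) form an optimal solution of Problem (P). In particular the two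
problems have the same optimal value. -/
theorem equivalence_P_E
    {Ω : Type*} [MeasurableSpace Ω] {T m : ℕ}
    {𝕏 : ℕ → Type*} [∀ t, MeasurableSpace (𝕏 t)]
    {𝕌 : ℕ → Type*} [∀ t, MeasurableSpace (𝕌 t)]
    {𝕎 : ℕ → Type*} [∀ t, MeasurableSpace (𝕎 t)]
    (μ : Measure Ω) [IsProbabilityMeasure μ]
    (w : (t : ℕ) → Ω → 𝕎 t) (hw : ∀ t, Measurable (w t))
    (f : (t : ℕ) → 𝕏 t → 𝕌 t → 𝕎 (t + 1) → 𝕏 (t + 1))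
    (hf : ∀ t, Measurable fun p : 𝕏 t × 𝕌 t × 𝕎 (t + 1) => f t p.1 p.2.1 p.2.2)
    (L : (t : ℕ) → 𝕏 t → 𝕌 t → 𝕎 (t + 1) → ℝ≥0∞)
    (hL : ∀ t, Measurable fun p : 𝕏 t × 𝕌 t × 𝕎 (t + 1) => L t p.1 p.2.1 p.2.2)
    (K : 𝕏 T → ℝ≥0∞) (hK : Measurable K)
    (g : 𝕏 T → Fin m → ℝ) (hg : Measurable g) (hgpos : ∀ x i, 0 ≤ g x i)
    (t0 : ℕ) (ht0 : t0 ≤ T) (x0 : 𝕏 t0) (z0 : Fin m → ℝ) :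
    -- (i) an optimal solution of (P) induces an optimal solution of (E)
    (∀ (Ustar : (t : ℕ) → Ω → 𝕌 t) (Xstar : (t : ℕ) → Ω → 𝕏 t),
      AdmissibleP μ w f g t0 x0 z0 Ustar Xstar →
      (∀ U X, AdmissibleP μ w f g t0 x0 z0 U X →
        costP μ w L K t0 Ustar Xstar ≤ costP μ w L K t0 U X) →
      ∀ (Vstar : ℕ → Ω → Fin m → ℝ),
        (∀ t, Vstar t = fun ω =>
          (μ[fun ω' => g (Xstar T ω') | noiseFiltration w t0 (t + 1)]) ω
            - (μ[fun ω' => g (Xstar T ω') | noiseFiltration w t0 t]) ω) →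
      ∀ (Zstar : ℕ → Ω → Fin m → ℝ),
        (∀ ω, Zstar t0 ω = z0) →
        (∀ t, t0 ≤ t → t < T → ∀ ω, Zstar (t + 1) ω = Zstar t ω + Vstar t ω) →
        AdmissibleE μ w f g t0 x0 z0 Ustar Vstar Xstar Zstar ∧
        ∀ U V X Z, AdmissibleE μ w f g t0 x0 z0 U V X Z →
          costE μ w L K t0 Ustar Vstar Xstar Zstar ≤ costE μ w L K t0 U V X Z) ∧
    -- (ii) an optimal solution of (E) induces an optimal solution of (P)
    (∀ (Ub : (t : ℕ) → Ω → 𝕌 t) (Vb : ℕ → Ω → Fin m → ℝ)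
        (Xb : (t : ℕ) → Ω → 𝕏 t) (Zb : ℕ → Ω → Fin m → ℝ),
      AdmissibleE μ w f g t0 x0 z0 Ub Vb Xb Zb →
      (∀ U V X Z, AdmissibleE μ w f g t0 x0 z0 U V X Z →
        costE μ w L K t0 Ub Vb Xb Zb ≤ costE μ w L K t0 U V X Z) →
      AdmissibleP μ w f g t0 x0 z0 Ub Xb ∧
      ∀ U X, AdmissibleP μ w f g t0 x0 z0 U X →
        costP μ w L K t0 Ub Xb ≤ costP μ w L K t0 U X) ∧
    -- the two problems have the same optimal value
    (⨅ (U : (t : ℕ) → Ω → 𝕌 t) (X : (t : ℕ) → Ω → 𝕏 t)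
        (_ : AdmissibleP μ w f g t0 x0 z0 U X), costP μ w L K t0 U X)
      = ⨅ (U : (t : ℕ) → Ω → 𝕌 t) (V : ℕ → Ω → Fin m → ℝ)
          (X : (t : ℕ) → Ω → 𝕏 t) (Z : ℕ → Ω → Fin m → ℝ)
          (_ : AdmissibleE μ w f g t0 x0 z0 U V X Z), costE μ w L K t0 U V X Z := by
  refine ⟨?_, ?_, ?_⟩
  · -- (i)
    intro Ustar Xstar hPadm hPopt Vstar hVdef Zstar hZ0 hZrec
    have hEadm : AdmissibleE μ w f g t0 x0 z0 Ustar Vstar Xstar Zstar :=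
      PtoE hw hf hg ht0 hPadm hVdef hZ0 hZrec
    refine ⟨hEadm, ?_⟩
    intro U V X Z hE
    exact hPopt U X (EtoP hw hf hg hgpos ht0 hE)
  · -- (ii)
    intro Ub Vb Xb Zb hEadm hEopt
    refine ⟨EtoP hw hf hg hgpos ht0 hEadm, ?_⟩
    intro U X hP
    obtain ⟨V, Z, hE⟩ := exists_E hw hf hg ht0 hP
    exact hEopt U V X Z hE
  · -- equality of values
    apply le_antisymm
    · refine le_iInf fun U => le_iInf fun V => le_iInf fun X => le_iInf fun Z =>
        le_iInf fun hE => ?_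
      exact iInf_le_of_le U (iInf_le_of_le X
        (iInf_le_of_le (EtoP hw hf hg hgpos ht0 hE) le_rfl))
    · refine le_iInf fun U => le_iInf fun X => le_iInf fun hP => ?_
      obtain ⟨V, Z, hE⟩ := exists_E hw hf hg ht0 hP
      exact iInf_le_of_le U (iInf_le_of_le V (iInf_le_of_le X
        (iInf_le_of_le Z (iInf_le_of_le hE le_rfl))))
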